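/- Let $\alpha > 0$, $Q > 0$, and $M < 0$, and define on $\Omega > \sqrt{Q}/\alpha$ the function $\tilde{f}(\Omega) = 2 \alpha^2 Q + \frac{4 \alpha Q^{3/2}}{3 \Omega} - \frac{2M}{\Omega} + 4 \Omega \alpha^3 \sqrt{Q} + 4 \alpha^4 \Omega^2 \log\left(1 - \frac{\sqrt{Q}}{\Omega \alpha}\right)$. Then $\lim_{\Omega \to \infty} \Omega\, \tilde{f}(\Omega) = -2M > 0$, and there exists $r_0 > \sqrt{Q}/\alpha$ with $\tilde{f}(r_0) = 0$. -/

import Mathlib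

open Filter Topology

/-- For `M < 0`, the RegMax Bonnor--Melvin metric function satisfies
`Ω·f̃(Ω) → -2M > 0` at infinity and vanishes at some `r₀ > √Q/α`
(existence of the axis of symmetry). -/
theorem regMax_melvin_axis_exists
    (α Q M : ℝ) (hα : 0 < α) (hQ : 0 < Q) (hM : M < 0) (F : ℝ → ℝ)
    (hF : F = fun Ω => 2 * α ^ 2 * Q + 4 * α * (Q * Real.sqrt Q) / (3 * Ω)
      - 2 * M / Ω + 4 * Ω * α ^ 3 * Real.sqrt Q
      + 4 * α ^ 4 * Ω ^ 2 * Real.log (1 - Real.sqrt Q / (Ω * α))) :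
    Tendsto (fun Ω => Ω * F Ω) atTop (𝓝 (-2 * M)) ∧
    0 < -2 * M ∧
    ∃ r0 : ℝ, Real.sqrt Q / α < r0 ∧ F r0 = 0 := by
  have hs : 0 < Real.sqrt Q := Real.sqrt_pos.2 hQ
  set s := Real.sqrt Q with hsdef
  have hsq : s ^ 2 = Q := Real.sq_sqrt hQ.le
  set c := s / α with hcdef
  have hc : 0 < c := div_pos hs hα
  have hcα : c * α = s := div_mul_cancel₀ s hα.ne'
  -- key algebraic identity
  have key : ∀ Ω : ℝ, Ω ≠ 0 →
      Ω * F Ω - (-2 * M) = 4 * α ^ 4 * Ω ^ 3 *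
        ((∑ i ∈ Finset.range 3, (s / (Ω * α)) ^ (i + 1) / (i + 1))
          + Real.log (1 - s / (Ω * α))) := by
    intro Ω hΩ
    have hQs : Q = s ^ 2 := hsq.symm
    simp only [hF, Finset.sum_range_succ, Finset.sum_range_zero]
    push_cast
    rw [hQs]
    field_simp
    ring
  -- the limit at infinity
  have h2M : 0 < -2 * M := by linarith
  have hlim : Tendsto (fun Ω => Ω * F Ω) atTop (𝓝 (-2 * M)) := by
    have hb : Tendsto (fun Ω : ℝ => 8 * s ^ 4 / Ω) atTop (𝓝 0) :=
      Tendsto.div_atTop tendsto_const_nhds tendsto_id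
    have hbound : ∀ᶠ Ω in atTop, |Ω * F Ω - (-2 * M)| ≤ 8 * s ^ 4 / Ω := by
      filter_upwards [eventually_ge_atTop (max 1 (2 * c))] with Ω hΩ
      have hΩ1 : (1 : ℝ) ≤ Ω := le_trans (le_max_left _ _) hΩ
      have hΩ2c : 2 * c ≤ Ω := le_trans (le_max_right _ _) hΩ
      have hΩ0 : 0 < Ω := lt_of_lt_of_le one_pos hΩ1
      set x : ℝ := s / (Ω * α) with hxdef
      have hx0 : 0 < x := div_pos hs (mul_pos hΩ0 hα)
      have hxhalf : x ≤ 1 / 2 := by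
        rw [hxdef, div_le_div_iff₀ (mul_pos hΩ0 hα) two_pos]
        have : 2 * (c * α) ≤ Ω * α := by
          have := mul_le_mul_of_nonneg_right hΩ2c hα.le
          linarith [this]
        rw [hcα] at this
        linarith
      have hx1 : |x| < 1 := by rw [abs_of_pos hx0]; linarith
      have hest := Real.abs_log_sub_add_sum_range_le hx1 3
      rw [key Ω hΩ0.ne']
      rw [abs_mul]
      have h1x : (1 : ℝ) / 2 ≤ 1 - |x| := by rw [abs_of_pos hx0]; linarith
      have h1x' : (1:ℝ) / 2 ≤ 1 - x := by rwa [abs_of_pos hx0] at h1x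
      have hE : |(∑ i ∈ Finset.range 3, x ^ (i + 1) / (i + 1)) + Real.log (1 - x)|
          ≤ 2 * x ^ 4 := by
        refine hest.trans ?_
        rw [abs_of_pos hx0]
        rw [div_le_iff₀ (by linarith : (0:ℝ) < 1 - x)]
        norm_num
        nlinarith [pow_pos hx0 4, hxhalf]
      have hcoef : |4 * α ^ 4 * Ω ^ 3| = 4 * α ^ 4 * Ω ^ 3 :=
        abs_of_pos (by positivity)
      rw [hcoef]
      have hxval : x ^ 4 = s ^ 4 / (Ω ^ 4 * α ^ 4) := by
        rw [hxdef]; rw [div_pow]; ring_nf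
      calc 4 * α ^ 4 * Ω ^ 3 * |(∑ i ∈ Finset.range 3, x ^ (i + 1) / (i + 1))
            + Real.log (1 - x)|
          ≤ 4 * α ^ 4 * Ω ^ 3 * (2 * x ^ 4) := by
            exact mul_le_mul_of_nonneg_left hE (by positivity)
        _ = 8 * s ^ 4 / Ω := by
            rw [hxval]; field_simp; ring
    have habs : Tendsto (fun Ω => |Ω * F Ω - (-2 * M)|) atTop (𝓝 0) :=
      squeeze_zero' (Eventually.of_forall fun _ => abs_nonneg _) hbound hb
    have hdiff : Tendsto (fun Ω => Ω * F Ω - (-2 * M)) atTop (𝓝 0) :=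
      (tendsto_zero_iff_abs_tendsto_zero _).2 habs
    have := hdiff.add_const (-2 * M)
    simpa using this
  refine ⟨hlim, h2M, ?_⟩
  -- continuity of F on (c, ∞)
  have hcont : ∀ Ω ∈ Set.Ioi c, ContinuousAt F Ω := by
    intro Ω hΩ
    have hΩ0 : 0 < Ω := hc.trans hΩ
    have hΩα : 0 < Ω * α := mul_pos hΩ0 hα
    have hslt : s < Ω * α := by
      have := mul_lt_mul_of_pos_right (Set.mem_Ioi.1 hΩ) hα
      rwa [hcα] at this
    have harg : (0:ℝ) < 1 - s / (Ω * α) := by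
      rw [sub_pos, div_lt_one hΩα]; exact hslt
    rw [hF]
    refine ContinuousAt.add (ContinuousAt.add (ContinuousAt.sub
      (ContinuousAt.add continuousAt_const ?_) ?_) ?_) ?_
    · exact ContinuousAt.div continuousAt_const
        (continuousAt_const.mul continuousAt_id) (by simp [hΩ0.ne'])
    · exact ContinuousAt.div continuousAt_const continuousAt_id hΩ0.ne'
    · exact ((continuousAt_const.mul continuousAt_id).mul
        continuousAt_const).mul continuousAt_const
    · refine ContinuousAt.mul (continuousAt_const.mul (continuousAt_id.pow 2)) ?_
      refine ContinuousAt.log ?_ harg.ne'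
      exact continuousAt_const.sub (ContinuousAt.div continuousAt_const
        (continuousAt_id.mul continuousAt_const) hΩα.ne')
  -- F tends to -∞ as Ω → c⁺
  have hbot : Tendsto F (𝓝[>] c) atBot := by
    have hinner : Tendsto (fun Ω : ℝ => 1 - s / (Ω * α)) (𝓝[>] c) (𝓝[>] 0) := by
      refine tendsto_nhdsWithin_of_tendsto_nhds_of_eventually_within _ ?_ ?_
      · have hval : (1 : ℝ) - s / (c * α) = 0 := by
          rw [hcα, div_self hs.ne']; ring
        have : ContinuousAt (fun Ω : ℝ => 1 - s / (Ω * α)) c :=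
          continuousAt_const.sub (ContinuousAt.div continuousAt_const
            (continuousAt_id.mul continuousAt_const) (by positivity))
        have h2 : Tendsto (fun Ω : ℝ => 1 - s / (Ω * α)) (𝓝[>] c)
            (𝓝 (1 - s / (c * α))) := this.tendsto.mono_left nhdsWithin_le_nhds
        rwa [hval] at h2
      · filter_upwards [self_mem_nhdsWithin] with Ω hΩ
        have hΩα : 0 < Ω * α := mul_pos (hc.trans hΩ) hα
        have hslt : s < Ω * α := by
          have := mul_lt_mul_of_pos_right (Set.mem_Ioi.1 hΩ) hα
          rwa [hcα] at this
        simpa [Set.mem_Ioi, sub_pos, div_lt_one hΩα] using hslt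
    have hlog : Tendsto (fun Ω : ℝ => Real.log (1 - s / (Ω * α))) (𝓝[>] c) atBot :=
      Real.tendsto_log_nhdsGT_zero.comp hinner
    have hcoef : Tendsto (fun Ω : ℝ => 4 * α ^ 4 * Ω ^ 2) (𝓝[>] c)
        (𝓝 (4 * α ^ 4 * c ^ 2)) := by
      exact ((continuousAt_const.mul (continuousAt_id.pow 2)).tendsto).mono_left
        nhdsWithin_le_nhds
    have hg2 : Tendsto (fun Ω : ℝ => 4 * α ^ 4 * Ω ^ 2 *
        Real.log (1 - s / (Ω * α))) (𝓝[>] c) atBot :=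
      Tendsto.pos_mul_atBot (by positivity) hcoef hlog
    have hg1 : Tendsto (fun Ω : ℝ => 2 * α ^ 2 * Q + 4 * α * (Q * s) / (3 * Ω)
        - 2 * M / Ω + 4 * Ω * α ^ 3 * s) (𝓝[>] c)
        (𝓝 (2 * α ^ 2 * Q + 4 * α * (Q * s) / (3 * c) - 2 * M / c + 4 * c * α ^ 3 * s)) := by
      have : ContinuousAt (fun Ω : ℝ => 2 * α ^ 2 * Q + 4 * α * (Q * s) / (3 * Ω)
          - 2 * M / Ω + 4 * Ω * α ^ 3 * s) c := by
        refine ContinuousAt.add (ContinuousAt.sub (ContinuousAt.add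
          continuousAt_const ?_) ?_) ?_
        · exact ContinuousAt.div continuousAt_const
            (continuousAt_const.mul continuousAt_id) (by simp [hc.ne'])
        · exact ContinuousAt.div continuousAt_const continuousAt_id hc.ne'
        · exact ((continuousAt_const.mul continuousAt_id).mul
            continuousAt_const).mul continuousAt_const
      exact this.tendsto.mono_left nhdsWithin_le_nhds
    have := hg1.add_atBot hg2
    rw [hF]
    exact this
  -- pick a with F a < 0
  obtain ⟨a, hFa, ha⟩ :=
    ((hbot.eventually (eventually_lt_atBot 0)).and self_mem_nhdsWithin).exists
  have hac : c < a := ha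
  -- pick b ≥ a with F b > 0
  obtain ⟨b, hbpos, hab⟩ :=
    ((hlim.eventually (eventually_gt_nhds h2M)).and (eventually_ge_atTop a)).exists
  have hb0 : 0 < b := lt_of_lt_of_le (hc.trans hac) hab
  have hFb : 0 < F b := by
    by_contra h
    push_neg at h
    nlinarith
  -- intermediate value theorem
  have hconton : ContinuousOn F (Set.Icc a b) := fun x hx =>
    (hcont x (lt_of_lt_of_le hac hx.1)).continuousWithinAt
  have h0mem : (0 : ℝ) ∈ Set.Icc (F a) (F b) := ⟨hFa.le, hFb.le⟩
  obtain ⟨r0, hr0mem, hFr0⟩ := intermediate_value_Icc hab hconton h0mem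
  exact ⟨r0, lt_of_lt_of_le hac hr0mem.1, hFr0⟩
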